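/- Let A ⊂ ℂ^{n+1} be a central hyperplane arrangement whose smallest edge K = ⋂ᵢ Vᵢ has dimension k ≥ 1. Let M ⊂ ℙⁿ be the complement of the projectivized arrangement ℙ(A), and let M' ⊂ ℙ(ℂ^{n+1}/K) be the complement of the projectivized quotient arrangement. Then in K₀(Var_ℂ), [M] = 𝕃^k · [M'], where 𝕃 = [𝔸¹]. -/

import Mathlib

open scoped Classical
theorem incl_excl_aux {R : Type*} [CommRing R] (L : R) (W : Type)
    [AddCommGroup W] [Module ℂ W] [FiniteDimensional ℂ W]
    (μ : Set (Projectivization ℂ W) → R)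
    (hadd : ∀ A B : Set (Projectivization ℂ W), Disjoint A B → μ (A ∪ B) = μ A + μ B)
    (hlin : ∀ W' : Submodule ℂ W, μ {p : Projectivization ℂ W | p.submodule ≤ W'} =
      ∑ i ∈ Finset.range (Module.finrank ℂ W'), L ^ i)
    {d : ℕ} (V : Fin d → Submodule ℂ W) (s : Finset (Fin d)) :
    ∀ U : Submodule ℂ W,
    μ {p : Projectivization ℂ W | p.submodule ≤ U ∧ ∀ i ∈ s, ¬ p.submodule ≤ V i} =
      ∑ t ∈ s.powerset, (-1 : R) ^ t.card *
        ∑ i ∈ Finset.range (Module.finrank ℂ (U ⊓ t.inf V : Submodule ℂ W)), L ^ i := by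
  induction s using Finset.induction_on with
  | empty =>
    intro U
    simp only [Finset.notMem_empty, false_implies, implies_true, and_true,
      Finset.powerset_empty, Finset.sum_singleton, Finset.card_empty, pow_zero, one_mul,
      Finset.inf_empty]
    rw [Finset.inf_empty, inf_top_eq]
    exact hlin U
  | @insert a s ha ih =>
    intro U
    have hsplit :
        ({p : Projectivization ℂ W | p.submodule ≤ U ∧ ∀ i ∈ s, ¬ p.submodule ≤ V i} : Set _) =
        {p : Projectivization ℂ W | p.submodule ≤ U ∧ ∀ i ∈ insert a s, ¬ p.submodule ≤ V i} ∪
        {p : Projectivization ℂ W | p.submodule ≤ U ⊓ V a ∧ ∀ i ∈ s, ¬ p.submodule ≤ V i} := by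
      ext p
      simp only [Set.mem_setOf_eq, Set.mem_union, Finset.mem_insert, le_inf_iff]
      constructor
      · rintro ⟨hU, hs⟩
        by_cases hpa : p.submodule ≤ V a
        · exact Or.inr ⟨⟨hU, hpa⟩, hs⟩
        · exact Or.inl ⟨hU, fun i hi => hi.elim (fun h => h ▸ hpa) (hs i)⟩
      · rintro (⟨hU, hs⟩ | ⟨⟨hU, _⟩, hs⟩)
        · exact ⟨hU, fun i hi => hs i (Or.inr hi)⟩
        · exact ⟨hU, hs⟩
    have hdisj : Disjoint
        {p : Projectivization ℂ W | p.submodule ≤ U ∧ ∀ i ∈ insert a s, ¬ p.submodule ≤ V i}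
        {p : Projectivization ℂ W | p.submodule ≤ U ⊓ V a ∧ ∀ i ∈ s, ¬ p.submodule ≤ V i} := by
      rw [Set.disjoint_left]
      rintro p ⟨_, h1⟩ ⟨h2, _⟩
      exact h1 a (Finset.mem_insert_self a s) (le_trans h2 inf_le_right)
    have key := hadd _ _ hdisj
    rw [← hsplit] at key
    have hmain : μ {p : Projectivization ℂ W | p.submodule ≤ U ∧
        ∀ i ∈ insert a s, ¬ p.submodule ≤ V i} = μ _ - μ _ := eq_sub_of_add_eq key.symm
    rw [hmain, ih U, ih (U ⊓ V a)]
    rw [Finset.sum_powerset_insert ha]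
    have hcongr : ∀ t ∈ s.powerset,
        (-1 : R) ^ (insert a t).card *
          ∑ i ∈ Finset.range (Module.finrank ℂ (U ⊓ (insert a t).inf V : Submodule ℂ W)), L ^ i
        = -((-1 : R) ^ t.card *
          ∑ i ∈ Finset.range (Module.finrank ℂ ((U ⊓ V a) ⊓ t.inf V : Submodule ℂ W)), L ^ i) := by
      intro t ht
      have hat : a ∉ t := fun h => ha (Finset.mem_powerset.mp ht h)
      rw [Finset.card_insert_of_notMem hat, Finset.inf_insert, ← inf_assoc]
      ring
    rw [Finset.sum_congr rfl hcongr, Finset.sum_neg_distrib]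
    ring

theorem complement_class_eq_lk_mul (n d k : ℕ) (hd : 1 ≤ d) (hk : 1 ≤ k)
    (Vi : Fin d → Submodule ℂ (Fin (n + 1) → ℂ))
    (hVi : ∀ i, Module.finrank ℂ (Vi i) = n)
    (hVinj : Function.Injective Vi)
    (K : Submodule ℂ (Fin (n + 1) → ℂ)) (hKdef : K = ⨅ i, Vi i)
    (hK : Module.finrank ℂ K = k)
    (R : Type*) [CommRing R] (L : R)
    (μ : ∀ (W : Type) [AddCommGroup W] [Module ℂ W] [FiniteDimensional ℂ W],
      Set (Projectivization ℂ W) → R)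
    (h0 : ∀ (W : Type) [AddCommGroup W] [Module ℂ W] [FiniteDimensional ℂ W],
      μ W (∅ : Set (Projectivization ℂ W)) = 0)
    (hadd : ∀ (W : Type) [AddCommGroup W] [Module ℂ W] [FiniteDimensional ℂ W]
      (A B : Set (Projectivization ℂ W)), Disjoint A B → μ W (A ∪ B) = μ W A + μ W B)
    (hlin : ∀ (W : Type) [AddCommGroup W] [Module ℂ W] [FiniteDimensional ℂ W]
      (W' : Submodule ℂ W),
      μ W {p : Projectivization ℂ W | p.submodule ≤ W'} =
        ∑ i ∈ Finset.range (Module.finrank ℂ W'), L ^ i) :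
    μ (Fin (n + 1) → ℂ)
        {p : Projectivization ℂ (Fin (n + 1) → ℂ) | ∀ i, ¬ p.submodule ≤ Vi i} =
    L ^ k *
      μ ((Fin (n + 1) → ℂ) ⧸ K)
        {p : Projectivization ℂ ((Fin (n + 1) → ℂ) ⧸ K) |
          ∀ i, ¬ p.submodule ≤ (Vi i).map K.mkQ} := by
  set W := Fin (n + 1) → ℂ with hW
  set g := K.mkQ with hg
  have hKle : ∀ i, K ≤ Vi i := fun i => hKdef ▸ iInf_le _ i
  have hKinf : ∀ t : Finset (Fin d), K ≤ t.inf Vi :=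
    fun t => Finset.le_inf fun i _ => hKle i
  -- comap g (map g P) = P when K ≤ P
  have hcm : ∀ P : Submodule ℂ W, K ≤ P → Submodule.comap g (Submodule.map g P) = P := by
    intro P hP
    rw [Submodule.comap_map_eq, Submodule.ker_mkQ, sup_eq_left.mpr hP]
  -- map commutes with finite infs
  have hmapinf : ∀ t : Finset (Fin d),
      t.inf (fun i => (Vi i).map g) = (t.inf Vi).map g := by
    intro t
    induction t using Finset.induction_on with
    | empty =>
      rw [Finset.inf_empty, Finset.inf_empty, Submodule.map_top]
      exact (Submodule.range_mkQ K).symm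
    | @insert a s ha ih =>
      rw [Finset.inf_insert, Finset.inf_insert, ih]
      have h := Submodule.map_inf_eq_map_inf_comap (f := g) (p := Vi a)
        (p' := Submodule.map g (s.inf Vi))
      rw [hcm _ (hKinf s)] at h
      exact h
  -- rank of the image
  have hfr : ∀ P : Submodule ℂ W, K ≤ P →
      Module.finrank ℂ (Submodule.map g P) + k = Module.finrank ℂ P := by
    intro P hP
    have h1 := LinearMap.finrank_range_add_finrank_ker (g ∘ₗ P.subtype)
    rw [LinearMap.range_comp, Submodule.range_subtype] at h1
    have hker : LinearMap.ker (g ∘ₗ P.subtype) = Submodule.comap P.subtype K := by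
      rw [LinearMap.ker_comp, Submodule.ker_mkQ]
    rw [hker] at h1
    have h2 : Module.finrank ℂ (Submodule.comap P.subtype K) = k := by
      rw [← hK]
      exact LinearEquiv.finrank_eq (Submodule.comapSubtypeEquivOfLe hP)
    rw [h2] at h1
    exact h1
  have hrk : ∀ t : Finset (Fin d), k ≤ Module.finrank ℂ (t.inf Vi : Submodule ℂ W) := by
    intro t
    rw [← hK]
    exact Submodule.finrank_mono (hKinf t)
  -- rewrite the two sets to the aux form
  have hset1 : {p : Projectivization ℂ W | ∀ i, ¬ p.submodule ≤ Vi i} =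
      {p : Projectivization ℂ W | p.submodule ≤ (⊤ : Submodule ℂ W) ∧
        ∀ i ∈ (Finset.univ : Finset (Fin d)), ¬ p.submodule ≤ Vi i} := by
    ext p; simp
  have hset2 : {p : Projectivization ℂ (W ⧸ K) | ∀ i, ¬ p.submodule ≤ (Vi i).map g} =
      {p : Projectivization ℂ (W ⧸ K) | p.submodule ≤ (⊤ : Submodule ℂ (W ⧸ K)) ∧
        ∀ i ∈ (Finset.univ : Finset (Fin d)), ¬ p.submodule ≤ (fun i => (Vi i).map g) i} := by
    ext p; simp
  rw [hset1, hset2,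
    incl_excl_aux L W (μ W) (hadd W) (hlin W) Vi Finset.univ ⊤,
    incl_excl_aux L (W ⧸ K) (μ (W ⧸ K)) (hadd (W ⧸ K)) (hlin (W ⧸ K))
      (fun i => (Vi i).map g) Finset.univ ⊤]
  -- now pure algebra
  have hrkq : ∀ t : Finset (Fin d),
      Module.finrank ℂ ((⊤ : Submodule ℂ (W ⧸ K)) ⊓ t.inf (fun i => (Vi i).map g) :
        Submodule ℂ (W ⧸ K)) = Module.finrank ℂ (t.inf Vi : Submodule ℂ W) - k := by
    intro t
    rw [top_inf_eq, hmapinf t]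
    exact Nat.eq_sub_of_add_eq (hfr _ (hKinf t))
  have hzero : ∑ t ∈ (Finset.univ : Finset (Fin d)).powerset, (-1 : R) ^ t.card = 0 := by
    have h := Finset.prod_add (fun _ : Fin d => (-1 : R)) (fun _ => (1 : R)) Finset.univ
    simp only [Finset.prod_const, one_pow, mul_one] at h
    rw [← h, neg_add_cancel, Finset.card_univ, Fintype.card_fin]
    exact zero_pow (by omega)
  have hterm : ∀ t ∈ (Finset.univ : Finset (Fin d)).powerset,
      (-1 : R) ^ t.card *
        ∑ i ∈ Finset.range (Module.finrank ℂ
          ((⊤ : Submodule ℂ W) ⊓ t.inf Vi : Submodule ℂ W)), L ^ i =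
      (-1 : R) ^ t.card * ∑ i ∈ Finset.range k, L ^ i +
        L ^ k * ((-1 : R) ^ t.card *
          ∑ i ∈ Finset.range (Module.finrank ℂ
            ((⊤ : Submodule ℂ (W ⧸ K)) ⊓ t.inf (fun i => (Vi i).map g) :
              Submodule ℂ (W ⧸ K))), L ^ i) := by
    intro t _
    rw [hrkq t, top_inf_eq]
    have hm : Module.finrank ℂ (t.inf Vi : Submodule ℂ W) =
        k + (Module.finrank ℂ (t.inf Vi : Submodule ℂ W) - k) :=
      (Nat.add_sub_cancel' (hrk t)).symm
    rw [hm, Finset.sum_range_add]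
    have : ∑ i ∈ Finset.range (Module.finrank ℂ (t.inf Vi : Submodule ℂ W) - k),
        L ^ (k + i) = L ^ k * ∑ i ∈ Finset.range
          (Module.finrank ℂ (t.inf Vi : Submodule ℂ W) - k), L ^ i := by
      rw [Finset.mul_sum]
      exact Finset.sum_congr rfl fun i _ => pow_add L k i
    rw [this]
    simp only [Nat.add_sub_cancel_left]
    ring
  rw [Finset.sum_congr rfl hterm, Finset.sum_add_distrib, ← Finset.sum_mul, hzero,
    zero_mul, zero_add, ← Finset.mul_sum]
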